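/- If A is a nonempty proper subset of C(v) and T₁ is obtained from T by redefining only the children in A to be children of u (keeping C(v) \ A as children of v, all other parent–child relations unchanged), then there exists a Hamiltonian cycle on S that conforms to T but not to T₁; hence Λ(T) ⊄ Λ(T₁). In other words, the degree-increasing operation cannot be performed partially. -/

import Mathlib

/-- A rooted tree on a vertex type `V`, given by a parent function under which
every vertex reaches the root. -/
structure ParentTree (V : Type) where
  root : V
  parent : V → V
  parent_root : parent root = root
  reaches_root : ∀ v, ∃ k, parent^[k] v = root

namespace ParentTree

variable {V : Type}

/-- The set `C(u)` of children of `u`. -/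
def children (T : ParentTree V) (u : V) : Set V := {v | T.parent v = u ∧ v ≠ u}

/-- The set `T(u)` of descendants of `u` (including `u` itself). -/
def desc (T : ParentTree V) (u : V) : Set V := {b | ∃ k, T.parent^[k] b = u}

/-- For a set `U` of siblings, `T(U) = ⋃_{u ∈ U} T(u)`. -/
def descU (T : ParentTree V) (U : Set V) : Set V := ⋃ u ∈ U, T.desc u

end ParentTree

/-- The set of points occurring in a list. -/
def listSet {V : Type} (l : List V) : Set V := {x | x ∈ l}

/-- The weight of a Hamiltonian cycle given as a list: the sum of distances
over cyclically consecutive pairs. -/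
def cycleWeight {V X : Type} [MetricSpace X] (f : V → X) (h : List V) : ℝ :=
  ((h.zip (h.rotate 1)).map fun p => dist (f p.1) (f p.2)).sum

/-- A Hamiltonian cycle on the point set: a cyclic ordering of all points,
represented as a duplicate-free list containing every point. -/
def IsHamCycle {V : Type} (h : List V) : Prop := h.Nodup ∧ ∀ x : V, x ∈ h

/-- The set `A` forms a contiguous cyclic arc of the cycle `h`. -/
def IsCyclicArc {V : Type} (A : Set V) (h : List V) : Prop :=
  ∃ i : ℕ, listSet ((h.rotate i).take A.ncard) = A

/-- A Hamiltonian cycle conforms to the rooted tree `T` if for every node `u`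
the set `T(u)` of descendants of `u` forms a contiguous cyclic arc of the cycle. -/
def CycleConforms {V : Type} (T : ParentTree V) (h : List V) : Prop :=
  ∀ u : V, IsCyclicArc (T.desc u) h

namespace Aux10

variable {V : Type}

theorem iterate_root (T : ParentTree V) (t : ℕ) : T.parent^[t] T.root = T.root :=
  Function.iterate_fixed T.parent_root t

theorem periodic_root (T : ParentTree V) {w : V} {m : ℕ} (hm : 1 ≤ m)
    (h : T.parent^[m] w = w) : w = T.root := by
  obtain ⟨k, hk⟩ := T.reaches_root w
  have hmul : ∀ j, T.parent^[m * j] w = w := by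
    intro j
    induction j with
    | zero => simp
    | succ j ih => rw [Nat.mul_succ, Function.iterate_add_apply, h, ih]
  have hge : k ≤ m * k := Nat.le_mul_of_pos_left k hm
  have h2 : T.parent^[m * k] w = T.root := by
    rw [show m * k = (m * k - k) + k from (Nat.sub_add_cancel hge).symm,
      Function.iterate_add_apply, hk, iterate_root]
  rw [hmul k] at h2
  exact h2

theorem mem_desc_self (T : ParentTree V) (w : V) : w ∈ T.desc w := ⟨0, rfl⟩

theorem not_mem_desc_parent (T : ParentTree V) {c w : V} (hc : c ∈ T.children w) :
    w ∉ T.desc c := by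
  rintro ⟨k, hk⟩
  have h1 : T.parent^[k + 1] w = w := by
    rw [Function.iterate_succ_apply', hk, hc.1]
  have hw : w = T.root := periodic_root T (Nat.le_add_left 1 k) h1
  have : c = w := by rw [← hk, hw, iterate_root]
  exact hc.2 this

theorem desc_step (T : ParentTree V) {x y : V} (h : T.parent x ∈ T.desc y) :
    x ∈ T.desc y := by
  obtain ⟨k, hk⟩ := h
  exact ⟨k + 1, by rw [Function.iterate_succ_apply]; exact hk⟩

theorem desc_child_subset (T : ParentTree V) {c w : V} (hc : c ∈ T.children w) :
    T.desc c ⊆ T.desc w := by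
  rintro x ⟨k, hk⟩
  exact ⟨k + 1, by rw [Function.iterate_succ_apply', hk, hc.1]⟩

theorem desc_eq (T : ParentTree V) (w : V) :
    T.desc w = insert w (⋃ c ∈ T.children w, T.desc c) := by
  ext x
  simp only [Set.mem_insert_iff, Set.mem_iUnion, exists_prop]
  constructor
  · rintro ⟨k, hk⟩
    induction k with
    | zero => exact Or.inl hk
    | succ k ih =>
      rw [Function.iterate_succ_apply'] at hk
      by_cases hy : T.parent^[k] x = w
      · exact ih hy
      · exact Or.inr ⟨T.parent^[k] x, ⟨hk, hy⟩, ⟨k, rfl⟩⟩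
  · rintro (rfl | ⟨c, hc, hx⟩)
    · exact mem_desc_self T x
    · exact desc_child_subset T hc hx

theorem desc_unique_child (T : ParentTree V) {c c' w x : V} (hc : c ∈ T.children w)
    (hc' : c' ∈ T.children w) (hx : x ∈ T.desc c) (hx' : x ∈ T.desc c') : c = c' := by
  obtain ⟨i, hi⟩ := hx
  obtain ⟨j, hj⟩ := hx'
  -- wlog helper
  have key : ∀ (d d' : V), d ∈ T.children w → d' ∈ T.children w →
      ∀ (i j : ℕ), T.parent^[i] x = d → T.parent^[j] x = d' → i ≤ j → d = d' := by
    intro d d' hd hd' i j hi hj hij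
    have h1 : T.parent^[j - i] d = d' := by
      rw [← hi, ← Function.iterate_add_apply, Nat.sub_add_cancel hij, hj]
    rcases Nat.eq_zero_or_pos (j - i) with h0 | hpos
    · rw [h0] at h1; exact h1
    · exfalso
      obtain ⟨e, he⟩ : ∃ e, j - i = e + 1 := ⟨j - i - 1, by omega⟩
      rw [he, Function.iterate_succ_apply, hd.1] at h1
      have h2 : T.parent^[e + 1] w = w := by
        rw [Function.iterate_succ_apply', h1, hd'.1]
      have hw : w = T.root := periodic_root T (Nat.le_add_left 1 e) h2
      have : d' = w := by rw [← h1, hw, iterate_root]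
      exact hd'.2 this
  rcases le_total i j with hij | hij
  · exact key c c' hc hc' i j hi hj hij
  · exact (key c' c hc' hc j i hj hi hij).symm

theorem desc_ssubset (T : ParentTree V) {c w : V} (hc : c ∈ T.children w) :
    T.desc c ⊂ T.desc w :=
  ⟨desc_child_subset T hc, fun hsub => not_mem_desc_parent T hc (hsub (mem_desc_self T w))⟩

/-! ### DFS -/

def dfsAux (cl : V → List V) : ℕ → V → List V
  | 0, w => [w]
  | n + 1, w => w :: (cl w).flatMap (dfsAux cl n)

theorem flatMap_congr {α β : Type*} {l : List α} {f g : α → List β}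
    (h : ∀ x ∈ l, f x = g x) : l.flatMap f = l.flatMap g := by
  induction l with
  | nil => rfl
  | cons a l ih =>
    rw [List.flatMap_cons, List.flatMap_cons, h a List.mem_cons_self,
      ih fun x hx => h x (List.mem_cons_of_mem a hx)]

theorem infix_flatMap {α β : Type*} {l : List α} (f : α → List β) {x : α} (hx : x ∈ l) :
    f x <:+: l.flatMap f := by
  induction l with
  | nil => exact absurd hx List.not_mem_nil
  | cons a l ih =>
    rw [List.flatMap_cons]
    rcases List.mem_cons.1 hx with rfl | hx
    · exact ⟨[], l.flatMap f, by simp⟩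
    · obtain ⟨s, t, hst⟩ := ih hx
      exact ⟨f a ++ s, t, by rw [← hst]; simp [List.append_assoc]⟩

variable [Fintype V] (T : ParentTree V) (cl : V → List V)
  (hnd : ∀ w, (cl w).Nodup) (hset : ∀ w c, c ∈ cl w ↔ c ∈ T.children w)

theorem ncard_desc_pos (w : V) : 0 < (T.desc w).ncard :=
  (Set.ncard_pos (Set.toFinite _)).2 ⟨w, mem_desc_self T w⟩

theorem ncard_desc_lt {c w : V} (hc : c ∈ T.children w) :
    (T.desc c).ncard < (T.desc w).ncard :=
  Set.ncard_lt_ncard (desc_ssubset T hc) (Set.toFinite _)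

theorem ncard_desc_le_card (w : V) : (T.desc w).ncard ≤ Fintype.card V := by
  have := Set.ncard_le_ncard (Set.subset_univ (T.desc w)) Set.finite_univ
  rwa [Set.ncard_univ, Nat.card_eq_fintype_card] at this

include hset in
theorem dfs_stable : ∀ n w, (T.desc w).ncard ≤ n → dfsAux cl (n + 1) w = dfsAux cl n w := by
  intro n
  induction n with
  | zero => intro w hw; exact absurd hw (by have := ncard_desc_pos T w; omega)
  | succ n ih =>
    intro w hw
    show _ :: _ = _ :: _
    congr 1
    apply flatMap_congr
    intro c hc
    have hcc : c ∈ T.children w := (hset w c).1 hc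
    exact ih c (by have := ncard_desc_lt T hcc; omega)

include hset in
theorem dfs_stable' : ∀ n m w, (T.desc w).ncard ≤ m → m ≤ n →
    dfsAux cl n w = dfsAux cl m w := by
  intro n
  induction n with
  | zero => intro m w _ hm; rw [Nat.le_zero.1 hm]
  | succ n ih =>
    intro m w hw hm
    rcases Nat.eq_or_lt_of_le hm with rfl | hlt
    · rfl
    · rw [dfs_stable T cl hset n w (le_trans hw (by omega)), ih m w hw (by omega)]

include hnd hset in
theorem dfs_main : ∀ n w, (T.desc w).ncard ≤ n →
    listSet (dfsAux cl n w) = T.desc w ∧ (dfsAux cl n w).Nodup := by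
  intro n
  induction n with
  | zero => intro w hw; exact absurd hw (by have := ncard_desc_pos T w; omega)
  | succ n ih =>
    intro w hw
    have hch : ∀ c ∈ cl w, c ∈ T.children w := fun c hc => (hset w c).1 hc
    have hcard : ∀ c ∈ cl w, (T.desc c).ncard ≤ n := fun c hc => by
      have := ncard_desc_lt T (hch c hc); omega
    constructor
    · ext x
      show x ∈ _ :: _ ↔ _
      rw [List.mem_cons, List.mem_flatMap]
      rw [desc_eq T w]
      simp only [Set.mem_insert_iff, Set.mem_iUnion, exists_prop]
      constructor
      · rintro (rfl | ⟨c, hc, hx⟩)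
        · exact Or.inl rfl
        · refine Or.inr ⟨c, hch c hc, ?_⟩
          have := (ih c (hcard c hc)).1
          rw [← this]; exact hx
      · rintro (rfl | ⟨c, hc, hx⟩)
        · exact Or.inl rfl
        · refine Or.inr ⟨c, (hset w c).2 hc, ?_⟩
          have := (ih c (hcard c ((hset w c).2 hc))).1
          rw [show (x ∈ dfsAux cl n c) = (x ∈ listSet (dfsAux cl n c)) from rfl, this]
          exact hx
    · show (_ :: _).Nodup
      rw [List.nodup_cons]
      constructor
      · intro hmem
        obtain ⟨c, hc, hx⟩ := List.mem_flatMap.1 hmem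
        have hxd : w ∈ T.desc c := by
          have := (ih c (hcard c hc)).1
          rw [show (w ∈ dfsAux cl n c) = (w ∈ listSet (dfsAux cl n c)) from rfl, this] at hx
          exact hx
        exact not_mem_desc_parent T (hch c hc) hxd
      · rw [List.nodup_flatMap]
        refine ⟨fun c hc => (ih c (hcard c hc)).2, ?_⟩
        refine (hnd w).imp_of_mem ?_
        intro c c' hc hc' hne
        rw [Function.onFun]
        rw [List.disjoint_left]
        intro x hx hx'
        have hxc : x ∈ T.desc c := by
          have := (ih c (hcard c hc)).1
          rw [show (x ∈ dfsAux cl n c) = (x ∈ listSet (dfsAux cl n c)) from rfl, this] at hx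
          exact hx
        have hxc' : x ∈ T.desc c' := by
          have := (ih c' (hcard c' hc')).1
          rw [show (x ∈ dfsAux cl n c') = (x ∈ listSet (dfsAux cl n c')) from rfl, this] at hx'
          exact hx'
        exact hne (desc_unique_child T (hch c hc) (hch c' hc') hxc hxc')

include hset in
theorem dfs_infix_child {c w : V} (hc : c ∈ T.children w) :
    dfsAux cl (Fintype.card V) c <:+: dfsAux cl (Fintype.card V) w := by
  have hN : 1 ≤ Fintype.card V := @Fintype.card_pos V _ ⟨T.root⟩
  obtain ⟨N', hN'⟩ : ∃ n, Fintype.card V = n + 1 := ⟨Fintype.card V - 1, by omega⟩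
  have hstab : dfsAux cl N' c = dfsAux cl (Fintype.card V) c := by
    refine (dfs_stable' T cl hset (Fintype.card V) N' c ?_ (by omega)).symm
    have h1 := ncard_desc_lt T hc
    have h2 := ncard_desc_le_card T w
    omega
  rw [hN']
  show _ <:+: _ :: (cl w).flatMap (dfsAux cl N')
  have hmem : c ∈ cl w := (hset w c).2 hc
  obtain ⟨s, t, hst⟩ := infix_flatMap (dfsAux cl N') hmem
  rw [hstab] at hst
  exact ⟨w :: s, t, by rw [← hN', ← hst]; rfl⟩

include hset in
theorem dfs_infix_desc (k : ℕ) : ∀ x w : V, T.parent^[k] x = w →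
    dfsAux cl (Fintype.card V) x <:+: dfsAux cl (Fintype.card V) w := by
  induction k with
  | zero => intro x w h; rw [show x = w from h]
  | succ k ih =>
    intro x w h
    rw [Function.iterate_succ_apply'] at h
    have h1 := ih x (T.parent^[k] x) rfl
    by_cases hyw : T.parent^[k] x = w
    · rwa [hyw] at h1
    · exact h1.trans (dfs_infix_child T cl hset ⟨h, hyw⟩)

theorem length_eq_ncard {l : List V} (h : l.Nodup) : l.length = (listSet l).ncard := by
  classical
  have : listSet l = ↑l.toFinset := by ext x; simp [listSet]
  rw [this, Set.ncard_coe_finset, List.toFinset_card_of_nodup h]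

end Aux10

open Aux10

/-- The degree-increasing operation cannot be performed partially: if only the
children in a nonempty proper subset `A ⊊ C(v)` are redefined to be children
of `u`, then some Hamiltonian cycle conforms to `T` but not to `T₁`. -/
theorem stmt10 {V X : Type} [Fintype V] [MetricSpace X]
    (hn : 3 ≤ Fintype.card V) (f : V → X) (hf : Function.Injective f)
    (T T₁ : ParentTree V) (u v : V) (hv : v ∈ T.children u)
    (hCv : (T.children v).Nonempty)
    (A : Set V) (hA : A ⊆ T.children v) (hAne : A.Nonempty)
    (hAproper : A ≠ T.children v)
    (hroot : T₁.root = T.root)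
    (hpar : ∀ w : V, (w ∈ A → T₁.parent w = u) ∧
      (w ∉ A → T₁.parent w = T.parent w)) :
    ∃ h : List V, IsHamCycle h ∧ CycleConforms T h ∧ ¬ CycleConforms T₁ h := by
  classical
  obtain ⟨hpv, hvu⟩ := hv
  obtain ⟨a, haA⟩ := hAne
  have haC : a ∈ T.children v := hA haA
  obtain ⟨b, hbC, hbA⟩ : ∃ b, b ∈ T.children v ∧ b ∉ A := by
    by_contra hcon
    push_neg at hcon
    exact hAproper (Set.Subset.antisymm hA hcon)
  set cl : V → List V := fun w =>
    if w = v then a :: ((T.children v \ {a}).toFinite.toFinset).toList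
    else ((T.children w).toFinite.toFinset).toList with hcl
  have hnd : ∀ w, (cl w).Nodup := by
    intro w
    rw [hcl]
    dsimp only
    split
    · rw [List.nodup_cons]
      refine ⟨?_, Finset.nodup_toList _⟩
      intro hmem
      rw [Finset.mem_toList, Set.Finite.mem_toFinset] at hmem
      exact hmem.2 rfl
    · exact Finset.nodup_toList _
  have hset : ∀ w c, c ∈ cl w ↔ c ∈ T.children w := by
    intro w c
    rw [hcl]; dsimp only
    split
    · rename_i hw
      subst hw
      rw [List.mem_cons, Finset.mem_toList, Set.Finite.mem_toFinset]
      constructor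
      · rintro (rfl | hc)
        · exact haC
        · exact hc.1
      · intro hc
        by_cases hca : c = a
        · exact Or.inl hca
        · exact Or.inr ⟨hc, hca⟩
    · rw [Finset.mem_toList, Set.Finite.mem_toFinset]
  obtain ⟨h, hh⟩ : ∃ l : List V, dfsAux cl (Fintype.card V) T.root = l := ⟨_, rfl⟩
  have hdesc_root : T.desc T.root = Set.univ := by
    ext x; simp only [Set.mem_univ, iff_true]; exact T.reaches_root x
  have hmain := dfs_main T cl hnd hset (Fintype.card V) T.root
    (ncard_desc_le_card T T.root)
  rw [hh] at hmain
  have hset_h : listSet h = Set.univ := by rw [← hdesc_root]; exact hmain.1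
  have hnd_h : h.Nodup := hmain.2
  have hmem_h : ∀ x, x ∈ h := fun x => by
    have hx : x ∈ listSet h := by rw [hset_h]; trivial
    exact hx
  refine ⟨h, ⟨hnd_h, hmem_h⟩, ?_, ?_⟩
  · -- conforms to T
    intro w
    obtain ⟨k, hk⟩ := T.reaches_root w
    obtain ⟨l1, l2, heq⟩ := dfs_infix_desc T cl hset k w T.root hk
    rw [hh] at heq
    have hDmain := dfs_main T cl hnd hset (Fintype.card V) w (ncard_desc_le_card T w)
    refine ⟨l1.length, ?_⟩
    have hle : l1.length ≤ h.length := by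
      rw [← heq]; simp
    rw [List.rotate_eq_drop_append_take hle]
    have hdrop : h.drop l1.length = dfsAux cl (Fintype.card V) w ++ l2 := by
      rw [← heq, List.append_assoc, List.drop_left]
    have htake : h.take l1.length = l1 := by
      rw [← heq, List.append_assoc, List.take_left]
    rw [hdrop, htake]
    have hlen2 : (T.desc w).ncard = (dfsAux cl (Fintype.card V) w).length := by
      rw [length_eq_ncard hDmain.2, hDmain.1]
    rw [hlen2, List.append_assoc, List.take_left]
    exact hDmain.1
  · -- not conforms to T₁
    intro hc
    obtain ⟨i, hi⟩ := hc v
    have hu_nd : u ∉ T.desc v := not_mem_desc_parent T ⟨hpv, hvu⟩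
    have key1 : ∀ j, T.parent^[j] u ≠ v := by
      intro j hj
      have h1 : T.parent^[j + 1] u = u := by
        rw [Function.iterate_succ_apply', hj, hpv]
      have hu := periodic_root T (Nat.le_add_left 1 j) h1
      have hvu' : v = u := by rw [← hj, hu, iterate_root]
      exact hvu hvu'
    have key2 : ∀ j, T.parent^[j] u ∉ A := by
      intro j hj
      refine key1 (j + 1) ?_
      rw [Function.iterate_succ_apply', (hA hj).1]
    have key3 : ∀ j, T₁.parent^[j] u = T.parent^[j] u := by
      intro j
      induction j with
      | zero => rfl
      | succ j ih =>
        rw [Function.iterate_succ_apply', Function.iterate_succ_apply', ih,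
          (hpar _).2 (key2 j)]
    have hBsub : T₁.desc v ⊆ T.desc v := by
      have haux : ∀ k x, T₁.parent^[k] x = v → x ∈ T.desc v := by
        intro k
        induction k with
        | zero => intro x hx; rw [show x = v from hx]; exact mem_desc_self T v
        | succ k ih =>
          intro x hx
          rw [Function.iterate_succ_apply] at hx
          have hy := ih _ hx
          by_cases hxA : x ∈ A
          · rw [(hpar x).1 hxA] at hy; exact absurd hy hu_nd
          · rw [(hpar x).2 hxA] at hy; exact desc_step T hy
      rintro x ⟨k, hk⟩; exact haux k x hk
    have hvB : v ∈ T₁.desc v := mem_desc_self T₁ v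
    have hbB : b ∈ T₁.desc v :=
      ⟨1, by show T₁.parent b = v; rw [(hpar b).2 hbA, hbC.1]⟩
    have haB : a ∉ T₁.desc v := by
      rintro ⟨k, hk⟩
      cases k with
      | zero => exact haC.2 hk
      | succ k =>
        rw [Function.iterate_succ_apply, (hpar a).1 haA, key3 k] at hk
        exact key1 k hk
    -- structure of h around v
    obtain ⟨N2, hN2⟩ : ∃ n, Fintype.card V = n + 2 := ⟨Fintype.card V - 2, by omega⟩
    obtain ⟨ttt, hDv⟩ : ∃ tl, dfsAux cl (Fintype.card V) v = v :: a :: tl := by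
      rw [hN2]
      show ∃ tl, v :: (cl v).flatMap (dfsAux cl (N2 + 1)) = v :: a :: tl
      have hclv : cl v = a :: ((T.children v \ {a}).toFinite.toFinset).toList := by
        rw [hcl]; simp
      rw [hclv, List.flatMap_cons]
      exact ⟨_, rfl⟩
    have hvroot : v ≠ T.root := by
      intro hvr
      have huv : u = v := by rw [← hpv, hvr, T.parent_root]
      exact hvu huv.symm
    obtain ⟨k, hk⟩ := T.reaches_root v
    obtain ⟨l1, l2, heq⟩ := dfs_infix_desc T cl hset k v T.root hk
    rw [hh, hDv] at heq
    have hl1ne : l1 ≠ [] := by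
      intro hnil
      obtain ⟨N1, hN1⟩ : ∃ n, Fintype.card V = n + 1 := ⟨Fintype.card V - 1, by omega⟩
      have hrest : h = T.root :: (cl T.root).flatMap (dfsAux cl N1) := by
        rw [← hh, hN1]; rfl
      rw [hnil, List.nil_append, hrest, List.cons_append] at heq
      injection heq with h1 _
      exact hvroot h1
    have hj0pos : 1 ≤ l1.length := List.length_pos_iff.2 hl1ne
    have heq' : l1 ++ ((v :: a :: ttt) ++ l2) = h := by
      rw [← List.append_assoc]; exact heq
    have hlen : l1.length + (2 + ttt.length + l2.length) = h.length := by
      rw [← heq']; simp; omega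
    have hj0L : l1.length < h.length := by omega
    have hj1L : l1.length + 1 < h.length := by omega
    have hgv : h[l1.length]? = some v := by
      rw [← heq', List.getElem?_append_right (le_refl l1.length)]
      simp
    have hga : h[l1.length + 1]? = some a := by
      rw [← heq', List.getElem?_append_right (by omega : l1.length ≤ l1.length + 1)]
      have e : l1.length + 1 - l1.length = 1 := by omega
      rw [e]
      simp
    obtain ⟨p, hp, hpmem⟩ : ∃ p, h[l1.length - 1]? = some p ∧ p ∈ l1 := by
      have hp0 : (l1 ++ ((v :: a :: ttt) ++ l2))[l1.length - 1]? = l1[l1.length - 1]? := by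
        rw [List.getElem?_append, if_pos (by omega : l1.length - 1 < l1.length)]
      rw [heq'] at hp0
      obtain ⟨p, hp1⟩ : ∃ p, l1[l1.length - 1]? = some p :=
        ⟨l1[l1.length - 1]'(by omega), List.getElem?_eq_getElem _⟩
      refine ⟨p, by rw [hp0, hp1], ?_⟩
      obtain ⟨hb1, hb2⟩ := List.getElem?_eq_some_iff.1 hp1
      exact hb2 ▸ List.getElem_mem _
    have hdisj : ∀ x ∈ l1, x ∉ T.desc v := by
      have hnd2 : (l1 ++ ((v :: a :: ttt) ++ l2)).Nodup := by rw [heq']; exact hnd_h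
      rw [List.nodup_append] at hnd2
      intro x hx hxd
      refine hnd2.2.2 x hx x ?_ rfl
      apply List.mem_append_left
      have hx2 : x ∈ listSet (dfsAux cl (Fintype.card V) v) := by
        rw [(dfs_main T cl hnd hset (Fintype.card V) v (ncard_desc_le_card T v)).1]
        exact hxd
      rw [hDv] at hx2; exact hx2
    have hpB : p ∉ T₁.desc v := fun hpB => hdisj p hpmem (hBsub hpB)
    -- counting
    obtain ⟨m, hmdef⟩ : ∃ m, (T₁.desc v).ncard = m := ⟨_, rfl⟩
    rw [hmdef] at hi
    have hgnd : (h.rotate i).Nodup := List.nodup_rotate.2 hnd_h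
    have ht_nd : ((h.rotate i).take m).Nodup := (List.take_sublist m _).nodup hgnd
    have ht_len : ((h.rotate i).take m).length = m := by
      rw [length_eq_ncard ht_nd, hi, hmdef]
    have hmL : m ≤ h.length := by
      have h1 : ((h.rotate i).take m).length = min m h.length := by
        rw [List.length_take, List.length_rotate]
      rw [ht_len] at h1
      rw [h1]; exact min_le_right m h.length
    have hm2 : 2 ≤ m := by
      have h1 : 1 < (T₁.desc v).ncard :=
        (Set.one_lt_ncard_iff (Set.toFinite _)).2
          ⟨v, b, hvB, hbB, fun hvb => hbC.2 hvb.symm⟩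
      omega
    -- locate v in the arc
    obtain ⟨j, hj⟩ : ∃ j, ((h.rotate i).take m)[j]? = some v := by
      apply List.getElem?_of_mem
      have hv2 : v ∈ listSet ((h.rotate i).take m) := by rw [hi]; exact hvB
      exact hv2
    have hjm : j < m := by
      by_contra hge
      rw [List.getElem?_take_eq_none (by omega : m ≤ j)] at hj
      exact nomatch hj
    have hjL : j < h.length := by omega
    have hrot : ∀ jj : ℕ, jj < m →
        ((h.rotate i).take m)[jj]? = h[(jj + i) % h.length]? := by
      intro jj hjj
      rw [List.getElem?_take_of_lt hjj, List.getElem?_rotate (by omega)]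
    have hE : (j + i) % h.length = l1.length := by
      have e3 : h[(j + i) % h.length]? = h[l1.length]? := by
        rw [← hrot j hjm, hj, hgv]
      rw [List.getElem?_eq_getElem (Nat.mod_lt _ (by omega)),
        List.getElem?_eq_getElem hj0L] at e3
      have e4 := Option.some.inj e3
      exact (hnd_h.getElem_inj_iff).1 e4
    obtain ⟨q, hq⟩ : ∃ q, j + i = h.length * q + l1.length := by
      have hdm := Nat.div_add_mod (j + i) h.length
      rw [hE] at hdm
      exact ⟨(j + i) / h.length, hdm.symm⟩
    rcases Nat.lt_or_ge (j + 1) m with hcase | hcase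
    · -- successor of v in the arc must be a, contradiction
      have e1 : ((h.rotate i).take m)[j + 1]? = some a := by
        rw [hrot (j + 1) hcase]
        have emod : (j + 1 + i) % h.length = l1.length + 1 := by
          have h3 : j + 1 + i = h.length * q + (l1.length + 1) := by omega
          rw [h3, Nat.mul_add_mod, Nat.mod_eq_of_lt hj1L]
        rw [emod, hga]
      have hamem : a ∈ (h.rotate i).take m := by
        obtain ⟨hb1, hb2⟩ := List.getElem?_eq_some_iff.1 e1
        exact hb2 ▸ List.getElem_mem _
      have : a ∈ T₁.desc v := by
        rw [← hi]; exact hamem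
      exact haB this
    · -- predecessor of v in the arc must be p, contradiction
      have hj1 : 1 ≤ j := by omega
      have e1 : ((h.rotate i).take m)[j - 1]? = some p := by
        rw [hrot (j - 1) (by omega)]
        have emod : (j - 1 + i) % h.length = l1.length - 1 := by
          have h3 : j - 1 + i = h.length * q + (l1.length - 1) := by omega
          rw [h3, Nat.mul_add_mod, Nat.mod_eq_of_lt (by omega)]
        rw [emod, hp]
      have hpmem2 : p ∈ (h.rotate i).take m := by
        obtain ⟨hb1, hb2⟩ := List.getElem?_eq_some_iff.1 e1
        exact hb2 ▸ List.getElem_mem _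
      have : p ∈ T₁.desc v := by
        rw [← hi]; exact hpmem2
      exact hpB this
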